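/- Let $x \in A^{\mathbb{N}}$ be a fixed point of a primitive Pisot substitution $\tau$, and let $\mu(a) = \lim_N |x_{[0,N-1]}|_a / N$ for each letter $a$. Then there exists $C > 0$ such that for all $a \in A$ and $N \in \mathbb{N}$, $\big| |x_{[0,N-1]}|_a - N\mu(a) \big| < C$. -/

import Mathlib

open Filter Topology

section Defs

variable {A : Type*} {B : Type*} {C : Type*}

/-- The one-sided shift map. -/
def shift (x : ℕ → A) : ℕ → A := fun n => x (n + 1)

/-- A (one-sided) subshift: a closed, shift-invariant set of configurations. -/
def Subshift [TopologicalSpace A] (X : Set (ℕ → A)) : Prop :=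
  IsClosed X ∧ ∀ x ∈ X, shift x ∈ X

/-- `X` is uniformly recurrent: every pattern occurring in `X` occurs in every
sufficiently long window of every point of `X`. -/
def UniformlyRecurrent (X : Set (ℕ → A)) : Prop :=
  ∀ x ∈ X, ∀ l : ℕ, ∃ N : ℕ, ∀ y ∈ X, ∃ i < N, ∀ k < l, y (i + k) = x k

/-- A block map: a continuous shift-commuting map. -/
def BlockMap [TopologicalSpace A] [TopologicalSpace B] (X : Set (ℕ → A)) (Y : Set (ℕ → B))
    (f : (ℕ → A) → (ℕ → B)) : Prop :=
  Set.MapsTo f X Y ∧ ContinuousOn f X ∧ ∀ x ∈ X, f (shift x) = shift (f x)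

/-- `s` is a cocycle for `Φ` on `X`: `Φ (σ x) = σ^(s x) (Φ x)`. -/
def IsCocycle (X : Set (ℕ → A)) (Φ : (ℕ → A) → (ℕ → B)) (s : (ℕ → A) → ℕ) : Prop :=
  ∀ x ∈ X, ∀ n : ℕ, Φ (shift x) n = Φ x (n + s x)

/-- A dill map: a continuous map with a continuous cocycle which is nontrivial
along every orbit. -/
def DillMap [TopologicalSpace A] [TopologicalSpace B] (X : Set (ℕ → A)) (Y : Set (ℕ → B))
    (Φ : (ℕ → A) → (ℕ → B)) : Prop :=
  Set.MapsTo Φ X Y ∧ ContinuousOn Φ X ∧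
    ∃ s : (ℕ → A) → ℕ, ContinuousOn s X ∧ IsCocycle X Φ s ∧
      ∀ x ∈ X, ∃ n : ℕ, 0 < s (shift^[n] x)

/-- Continuity (local constancy) of a word-valued function on `X`. -/
def WordContinuousOn (φ : (ℕ → A) → List B) (X : Set (ℕ → A)) : Prop :=
  ∀ x ∈ X, ∃ R : ℕ, ∀ y ∈ X, (∀ k ≤ R, y k = x k) → φ y = φ x

/-- `φ` is an implementation of `Φ` on `X`:
`Φ x = φ x ++ φ (σ x) ++ φ (σ² x) ++ ⋯`, expressed coordinatewise. -/
def IsImplementation (X : Set (ℕ → A)) (Φ : (ℕ → A) → (ℕ → B))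
    (φ : (ℕ → A) → List B) : Prop :=
  WordContinuousOn φ X ∧ ∀ x ∈ X, ∀ n : ℕ,
    Φ x n = if h : n < (φ x).length then (φ x).get ⟨n, h⟩
            else Φ (shift x) (n - (φ x).length)

/-- `ⁿφ(x) = φ(x) φ(σ x) ⋯ φ(σ^(n-1) x)`. -/
def iterWord (φ : (ℕ → A) → List B) (x : ℕ → A) : ℕ → List B
  | 0 => []
  | n + 1 => iterWord φ x n ++ φ (shift^[n] x)

/-- The invariant `Z`: `|ⁿφ(x)|/n → lam` for every `x ∈ X`. -/
def HasZ (X : Set (ℕ → A)) (φ : (ℕ → A) → List B) (lam : ℝ) : Prop :=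
  ∀ x ∈ X, Tendsto (fun n : ℕ => ((iterWord φ x n).length : ℝ) / n) atTop (𝓝 lam)

/-- `D` is a deviation bound: `| |ⁿφ(x)| - lam·n | ≤ D` for all `x ∈ X`, `n`. -/
def HasDBound (X : Set (ℕ → A)) (φ : (ℕ → A) → List B) (lam D : ℝ) : Prop :=
  ∀ x ∈ X, ∀ n : ℕ, |((iterWord φ x n).length : ℝ) - lam * n| ≤ D

/-- `R` is an in-radius bound for `φ` on `X`: `φ x` only depends on `x_[0,R]`. -/
def HasInRadius (X : Set (ℕ → A)) (φ : (ℕ → A) → List B) (R : ℕ) : Prop :=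
  ∀ x ∈ X, ∀ y ∈ X, (∀ k ≤ R, x k = y k) → φ x = φ y

/-- Almost equivalence: images of every point agree up to shifts. -/
def AlmostEquiv (X : Set (ℕ → A)) (Φ Ψ : (ℕ → A) → (ℕ → B)) : Prop :=
  ∀ x ∈ X, ∃ i j : ℕ, shift^[i] (Φ x) = shift^[j] (Ψ x)

/-- The implementation of the composition of two dill maps. -/
def compImpl (φ₁ : (ℕ → A) → List B) (Φ₁ : (ℕ → A) → (ℕ → B))
    (φ₂ : (ℕ → B) → List C) (x : ℕ → A) : List C :=
  iterWord φ₂ (Φ₁ x) (φ₁ x).length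

/-- Extension of a substitution to words. -/
def wordApply (τ : A → List A) (w : List A) : List A := (w.map τ).flatten

/-- Iterated image `τⁿ(a)` of a letter. -/
def subPow (τ : A → List A) : ℕ → A → List A
  | 0, a => [a]
  | n + 1, a => wordApply τ (subPow τ n a)

/-- The language of the substitution `τ`: infixes of the `τⁿ(a)`. -/
def InLanguage (τ : A → List A) (w : List A) : Prop :=
  ∃ a n, w <:+: subPow τ n a

/-- The one-sided subshift of the substitution `τ`. -/
def Xsub (τ : A → List A) : Set (ℕ → A) :=
  {x | ∀ i l : ℕ, InLanguage τ (List.ofFn fun k : Fin l => x (i + k))}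

/-- Primitivity of a substitution. -/
def Primitive (τ : A → List A) : Prop :=
  ∃ N, ∀ n ≥ N, ∀ a b : A, a ∈ subPow τ n b

/-- The word `w` occurs in `x` at position `i`. -/
def occursAt (w : List A) (x : ℕ → A) (i : ℕ) : Prop :=
  w = List.ofFn fun k : Fin w.length => x (i + k)

/-- The action of a (non-erasing) substitution on one-sided configurations. -/
def subApply [Inhabited A] (τ : A → List A) (x : ℕ → A) : ℕ → A :=
  fun n => (wordApply τ (List.ofFn fun k : Fin (n + 1) => x k)).getD n default

end Defs
section MatrixDefs

variable {A : Type*} [Fintype A] [DecidableEq A]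

/-- The associated matrix of a substitution. -/
def assocMatrix (τ : A → List A) : Matrix A A ℕ :=
  Matrix.of fun a b => (τ a).count b

/-- The complex spectrum of the associated matrix. -/
noncomputable def specC (τ : A → List A) : Set ℂ :=
  spectrum ℂ ((assocMatrix τ).map (fun n : ℕ => (n : ℂ)))

/-- The Pisot property: one eigenvalue of modulus `> 1`, all others of modulus `< 1`. -/
def PisotSub (τ : A → List A) : Prop :=
  ∃ μ ∈ specC τ, 1 < ‖μ‖ ∧ ∀ ν ∈ specC τ, ν ≠ μ → ‖ν‖ < 1

/-- `lam` is the dominant eigenvalue of the associated matrix of `τ`. -/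
def DominantEig (τ : A → List A) (lam : ℝ) : Prop :=
  (lam : ℂ) ∈ specC τ ∧ ∀ μ ∈ specC τ, μ ≠ (lam : ℂ) → ‖μ‖ < lam

end MatrixDefs

namespace S11

set_option linter.unusedSectionVars false

variable {A : Type*} [Fintype A] [DecidableEq A]

lemma wordApply_append (τ : A → List A) (u v : List A) :
    wordApply τ (u ++ v) = wordApply τ u ++ wordApply τ v := by
  simp [wordApply]

lemma count_cons' (c b : A) (w : List A) :
    (c :: w).count b = w.count b + if c = b then 1 else 0 := by
  by_cases h : c = b
  · subst h; simp
  · simp [h, List.count_cons_of_ne (Ne.symm h)]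

lemma sum_count_cons (w : List A) (c : A) (f : A → ℕ) :
    ∑ b, (c :: w).count b * f b = f c + ∑ b, w.count b * f b := by
  have h : ∀ b : A, ((c :: w).count b) * f b
      = w.count b * f b + (if c = b then f b else 0) := by
    intro b; by_cases hcb : c = b <;> simp [count_cons', hcb, add_mul]
  rw [Finset.sum_congr rfl (fun b _ => h b), Finset.sum_add_distrib, Finset.sum_ite_eq]
  simp [add_comm]

lemma count_wordApply (τ : A → List A) (w : List A) (a : A) :
    (wordApply τ w).count a = ∑ b, w.count b * (τ b).count a := by
  induction w with
  | nil => simp [wordApply]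
  | cons c w ih =>
    have h : wordApply τ (c :: w) = τ c ++ wordApply τ w := by simp [wordApply]
    rw [h, List.count_append, ih, sum_count_cons]

lemma length_eq_sum_count (w : List A) : w.length = ∑ a, w.count a := by
  induction w with
  | nil => simp
  | cons c w ih =>
    simp only [List.length_cons, ih, count_cons']
    rw [Finset.sum_add_distrib]
    simp

lemma length_wordApply (τ : A → List A) (w : List A) :
    (wordApply τ w).length = ∑ b, w.count b * (τ b).length := by
  induction w with
  | nil => simp [wordApply]
  | cons c w ih =>
    have h : wordApply τ (c :: w) = τ c ++ wordApply τ w := by simp [wordApply]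
    rw [h, List.length_append, ih, sum_count_cons]

lemma count_subPow (τ : A → List A) (m : ℕ) (b a : A) :
    (subPow τ m b).count a = ((assocMatrix τ)^m) b a := by
  induction m generalizing a with
  | zero => simp [subPow, Matrix.one_apply, List.count_singleton', eq_comm]
  | succ m ih =>
    show (wordApply τ (subPow τ m b)).count a = _
    rw [count_wordApply, pow_succ, Matrix.mul_apply]
    exact Finset.sum_congr rfl fun c _ => by rw [ih]; rfl

end S11

namespace S11

set_option linter.unusedSectionVars false

variable {A : Type*} [Fintype A] [DecidableEq A]

def pref (x : ℕ → A) (N : ℕ) : List A := List.ofFn fun k : Fin N => x k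

@[simp] lemma pref_length (x : ℕ → A) (N : ℕ) : (pref x N).length = N := by simp [pref]

lemma pref_add (x : ℕ → A) (m k : ℕ) :
    pref x (m + k) = pref x m ++ List.ofFn (fun i : Fin k => x (m + i)) := by
  rw [pref, List.ofFn_add]; rfl

lemma count_pref_mono (x : ℕ → A) {m N : ℕ} (h : m ≤ N) (a : A) :
    (pref x m).count a ≤ (pref x N).count a := by
  obtain ⟨k, rfl⟩ := Nat.exists_eq_add_of_le h
  rw [pref_add, List.count_append]
  omega

lemma count_pref_le (x : ℕ → A) {m N : ℕ} (h : m ≤ N) (a : A) :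
    (pref x N).count a ≤ (pref x m).count a + (N - m) := by
  obtain ⟨k, rfl⟩ := Nat.exists_eq_add_of_le h
  rw [pref_add, List.count_append]
  have := List.count_le_length (a := a) (l := List.ofFn (fun i : Fin k => x (m + i)))
  simp only [List.length_ofFn] at this
  omega

lemma mem_pref {x : ℕ → A} {N : ℕ} {c : A} (h : c ∈ pref x N) : ∃ p < N, x p = c := by
  rw [pref, List.mem_ofFn] at h
  obtain ⟨i, hi⟩ := h
  exact ⟨i, i.isLt, hi⟩

section Fix

variable {τ : A → List A} {x : ℕ → A} {E : ℕ → ℕ}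
variable (hE0 : E 0 = 0) (hEs : ∀ n, E (n + 1) = E n + (τ (x n)).length)
variable (hfix : ∀ n, occursAt (τ (x n)) x (E n))

include hE0 hEs hfix in
lemma pref_E : ∀ n, pref x (E n) = wordApply τ (pref x n) := by
  intro n
  induction n with
  | zero => rw [hE0]; simp [pref, wordApply]
  | succ n ih =>
    have h1 : pref x (E (n+1))
        = pref x (E n) ++ List.ofFn (fun i : Fin (τ (x n)).length => x (E n + i)) := by
      rw [hEs n]; exact pref_add x _ _
    have h2 : (List.ofFn fun i : Fin (τ (x n)).length => x (E n + i)) = τ (x n) :=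
      (hfix n).symm
    have h3 : pref x (n+1) = pref x n ++ [x n] := by
      rw [pref_add x n 1]; simp
    rw [h1, h2, h3, wordApply_append, ih]
    simp [wordApply]

variable (hL : ∀ b : A, 1 ≤ (τ b).length)

include hEs hL in
lemma E_strictMono : StrictMono E := by
  apply strictMono_nat_of_lt_succ
  intro n
  have h1 := hL (x n)
  have h2 := hEs n
  omega

include hE0 hEs hL in
lemma exists_level (N : ℕ) : ∃ n, E n ≤ N ∧ N < E (n + 1) := by
  classical
  have hmono := E_strictMono (τ := τ) hEs hL
  set P : ℕ → Prop := fun n => E n ≤ N with hP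
  have h0 : P 0 := by simp [P, hE0]
  set n := Nat.findGreatest P (N + 1) with hn
  have hPn : P n := Nat.findGreatest_spec (Nat.zero_le _) h0
  have hnleN : n ≤ N := le_trans (hmono.le_apply) hPn
  refine ⟨n, hPn, ?_⟩
  by_contra hcon
  push_neg at hcon
  exact Nat.findGreatest_is_greatest (Nat.lt_succ_self n |>.trans_le (by omega)) (by omega)
    hcon

end Fix

lemma tau_ne_nil {τ : A → List A} (hprim : Primitive τ) (b : A) : τ b ≠ [] := by
  obtain ⟨N, hN⟩ := hprim
  intro hb
  have hempty : ∀ n, subPow τ (n + 1) b = [] := by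
    intro n
    induction n with
    | zero => show wordApply τ (subPow τ 0 b) = []; simp [subPow, wordApply, hb]
    | succ n ih => show wordApply τ (subPow τ (n+1) b) = []; rw [ih]; simp [wordApply]
  have := hN (N + 1) (Nat.le_succ N) b b
  rw [hempty N] at this
  exact List.not_mem_nil this

lemma primitive_entries {τ : A → List A} (hprim : Primitive τ) :
    ∃ m, 1 ≤ m ∧ ∀ b a : A, 1 ≤ ((assocMatrix τ)^m) b a := by
  obtain ⟨N, hN⟩ := hprim
  refine ⟨N + 1, by omega, fun b a => ?_⟩
  have hmem := hN (N + 1) (Nat.le_succ N) a b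
  have : 0 < (subPow τ (N+1) b).count a := List.count_pos_iff.mpr hmem
  rw [count_subPow] at this
  omega

end S11

namespace S11

set_option linter.unusedSectionVars false

variable {A : Type*} [Fintype A] [DecidableEq A]

noncomputable def uu (x : ℕ → A) (N : ℕ) (a : A) : ℝ := ((pref x N).count a : ℝ)

noncomputable def Mr (τ : A → List A) [Fintype A] [DecidableEq A] : Matrix A A ℝ :=
  (assocMatrix τ).map Nat.cast

lemma Mr_pow_cast (τ : A → List A) (k : ℕ) (b a : A) :
    ((Mr τ)^k) b a = (((assocMatrix τ)^k) b a : ℝ) := by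
  have : (Mr τ)^k = ((assocMatrix τ)^k).map Nat.cast := by
    rw [Mr, show ∀ M : Matrix A A ℕ, M.map Nat.cast = (Nat.castRingHom ℝ).mapMatrix M from
      fun M => rfl]
    rw [← map_pow]
    rfl
  rw [this]; rfl

lemma Mr_nonneg (τ : A → List A) (k : ℕ) (b a : A) : 0 ≤ ((Mr τ)^k) b a := by
  rw [Mr_pow_cast]; positivity

noncomputable def lam0 (τ : A → List A) (μ : A → ℝ) : ℝ := ∑ b, μ b * ((τ b).length : ℝ)

section Freq

variable {τ : A → List A} {x : ℕ → A} {E : ℕ → ℕ} {μ : A → ℝ}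
variable (hE0 : E 0 = 0) (hEs : ∀ n, E (n + 1) = E n + (τ (x n)).length)
variable (hfix : ∀ n, occursAt (τ (x n)) x (E n))
variable (hL : ∀ b : A, 1 ≤ (τ b).length)
variable (hμ : ∀ a : A, Tendsto (fun N : ℕ => (uu x N a) / N) atTop (𝓝 (μ a)))

include hμ in
lemma mu_nonneg (a : A) : 0 ≤ μ a := by
  refine ge_of_tendsto (hμ a) ?_
  filter_upwards [eventually_ge_atTop 1] with N _
  simp only [uu]
  positivity

include hμ in
lemma sum_mu : ∑ a, μ a = 1 := by
  have h1 : Tendsto (fun N : ℕ => ∑ a, uu x N a / N) atTop (𝓝 (∑ a, μ a)) :=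
    tendsto_finset_sum _ fun a _ => hμ a
  have h2 : ∀ N : ℕ, 1 ≤ N → ∑ a, uu x N a / N = 1 := by
    intro N hN
    rw [← Finset.sum_div]
    have hsum : ∑ a, uu x N a = (N : ℝ) := by
      have h := length_eq_sum_count (pref x N)
      rw [pref_length] at h
      calc ∑ a, uu x N a = ((∑ a, (pref x N).count a : ℕ) : ℝ) := by
            simp only [uu]; push_cast; rfl
        _ = (N : ℝ) := by rw [← h]
    rw [hsum]
    have : (N:ℝ) ≠ 0 := by positivity
    field_simp
  have h3 : Tendsto (fun _ : ℕ => (1:ℝ)) atTop (𝓝 (∑ a, μ a)) := by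
    refine h1.congr' ?_
    filter_upwards [eventually_ge_atTop 1] with N hN
    exact h2 N hN
  exact tendsto_nhds_unique h3 tendsto_const_nhds

include hμ in
lemma mu_le_one (a : A) : μ a ≤ 1 := by
  have := sum_mu (x := x) hμ
  have h2 : ∀ b : A, 0 ≤ μ b := mu_nonneg hμ
  calc μ a ≤ ∑ b, μ b := Finset.single_le_sum (fun b _ => h2 b) (Finset.mem_univ a)
  _ = 1 := this

include hE0 hEs hfix in
lemma uu_E (n : ℕ) (a : A) : uu x (E n) a = ∑ b, uu x n b * Mr τ b a := by
  rw [uu, pref_E hE0 hEs hfix, count_wordApply]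
  push_cast
  rfl

include hE0 hEs hfix in
lemma E_cast_eq (n : ℕ) : ((E n : ℝ)) = ∑ b, uu x n b * ((τ b).length : ℝ) := by
  have h : (E n) = (pref x (E n)).length := (pref_length x (E n)).symm
  rw [h, pref_E hE0 hEs hfix, length_wordApply]
  push_cast
  rfl

include hE0 hEs hfix hμ in
lemma tendsto_E_div :
    Tendsto (fun n : ℕ => ((E n : ℝ)) / n) atTop (𝓝 (lam0 τ μ)) := by
  have h1 : Tendsto (fun n : ℕ => ∑ b, (uu x n b / n) * ((τ b).length : ℝ)) atTop
      (𝓝 (∑ b, μ b * ((τ b).length : ℝ))) :=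
    tendsto_finset_sum _ fun b _ => (hμ b).mul_const _
  refine h1.congr ?_
  intro n
  rw [E_cast_eq hE0 hEs hfix, Finset.sum_div]
  exact Finset.sum_congr rfl fun b _ => by ring

include hE0 hEs hfix hL hμ in
lemma eigen (a : A) : ∑ b, μ b * Mr τ b a = lam0 τ μ * μ a := by
  have hEmono := E_strictMono (τ := τ) hEs hL
  have hEtop : Tendsto E atTop atTop := hEmono.tendsto_atTop
  have h1 : Tendsto (fun n : ℕ => ∑ b, (uu x n b / n) * Mr τ b a) atTop
      (𝓝 (∑ b, μ b * Mr τ b a)) :=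
    tendsto_finset_sum _ fun b _ => (hμ b).mul_const _
  have h2 : Tendsto (fun n : ℕ => uu x (E n) a / (E n : ℝ)) atTop (𝓝 (μ a)) :=
    (hμ a).comp hEtop
  have h3 : Tendsto (fun n : ℕ => (uu x (E n) a / (E n : ℝ)) * ((E n : ℝ) / n)) atTop
      (𝓝 (μ a * lam0 τ μ)) := h2.mul (tendsto_E_div hE0 hEs hfix hμ)
  have h4 : Tendsto (fun n : ℕ => uu x (E n) a / n) atTop (𝓝 (μ a * lam0 τ μ)) := by
    refine h3.congr' ?_
    filter_upwards [eventually_ge_atTop 1] with n hn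
    have hEn : (0:ℝ) < (E n : ℝ) := by
      have h6 : n ≤ E n := hEmono.le_apply
      have : 1 ≤ E n := le_trans hn h6
      positivity
    field_simp
  have h5 : Tendsto (fun n : ℕ => uu x (E n) a / n) atTop (𝓝 (∑ b, μ b * Mr τ b a)) := by
    refine h1.congr ?_
    intro n
    rw [uu_E hE0 hEs hfix, Finset.sum_div]
    exact Finset.sum_congr rfl fun b _ => by ring
  rw [tendsto_nhds_unique h5 h4]
  ring

end Freq

end S11

namespace S11

set_option linter.unusedSectionVars false

variable {A : Type*} [Fintype A] [DecidableEq A]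

lemma spectrum_exists_eigvec {P : Matrix A A ℂ} {t : ℂ} (h : t ∈ spectrum ℂ P) :
    ∃ v : A → ℂ, v ≠ 0 ∧ ∀ a, ∑ b, P a b * v b = t * v a := by
  rw [spectrum.mem_iff] at h
  have hdet : (algebraMap ℂ (Matrix A A ℂ) t - P).det = 0 := by
    by_contra hd
    exact h ((Matrix.isUnit_iff_isUnit_det _).mpr (isUnit_iff_ne_zero.mpr hd))
  obtain ⟨v, hv, hmv⟩ := (Matrix.exists_mulVec_eq_zero_iff).mpr hdet
  refine ⟨v, hv, fun a => ?_⟩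
  have := congrFun hmv a
  simp only [Matrix.mulVec, dotProduct, Matrix.sub_apply,
    Matrix.algebraMap_matrix_apply, Algebra.algebraMap_self, RingHom.id_apply] at this
  rw [Finset.sum_congr rfl (fun b _ => by rw [sub_mul] : ∀ b ∈ Finset.univ,
    ((if a = b then t else 0) - P a b) * v b = (if a = b then t else 0) * v b - P a b * v b),
    Finset.sum_sub_distrib] at this
  simp only [ite_mul, zero_mul, Finset.sum_ite_eq, Finset.mem_univ, if_true,
    Pi.zero_apply] at this
  linear_combination -this

lemma left_eig_mem_spectrum {P : Matrix A A ℂ} {t : ℂ} {v : A → ℂ} (hv : v ≠ 0)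
    (h : ∀ a, ∑ b, v b * P b a = t * v a) : t ∈ spectrum ℂ P := by
  rw [spectrum.mem_iff]
  intro hu
  have hdet : (algebraMap ℂ (Matrix A A ℂ) t - P).det ≠ 0 := by
    intro h0
    exact (isUnit_iff_ne_zero.mp ((Matrix.isUnit_iff_isUnit_det _).mp hu)) h0
  apply hdet
  rw [← Matrix.det_transpose]
  apply (Matrix.exists_mulVec_eq_zero_iff).mp
  refine ⟨v, hv, ?_⟩
  funext a
  simp only [Matrix.mulVec, dotProduct, Matrix.transpose_apply, Matrix.sub_apply,
    Matrix.algebraMap_matrix_apply, Algebra.algebraMap_self, RingHom.id_apply]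
  rw [Finset.sum_congr rfl (fun b _ => by rw [sub_mul] : ∀ b ∈ Finset.univ,
    ((if b = a then t else 0) - P b a) * v b = (if b = a then t else 0) * v b - P b a * v b),
    Finset.sum_sub_distrib]
  simp only [ite_mul, zero_mul, Finset.sum_ite_eq', Finset.mem_univ, if_true, Pi.zero_apply]
  have hc : ∑ x, P x a * v x = ∑ b, v b * P b a :=
    Finset.sum_congr rfl fun b _ => mul_comm _ _
  rw [hc, h a]
  ring

end S11

namespace S11

set_option linter.unusedSectionVars false

variable {A : Type*} [Fintype A] [DecidableEq A]

noncomputable def Mc (τ : A → List A) : Matrix A A ℂ :=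
  (assocMatrix τ).map (fun n : ℕ => (n : ℂ))

lemma specC_eq (τ : A → List A) : specC τ = spectrum ℂ (Mc τ) := rfl

lemma Mc_pow_cast (τ : A → List A) (k : ℕ) (b a : A) :
    ((Mc τ)^k) b a = (((assocMatrix τ)^k) b a : ℂ) := by
  have : (Mc τ)^k = ((assocMatrix τ)^k).map Nat.cast := by
    rw [Mc, show ((assocMatrix τ).map (fun n : ℕ => (n : ℂ)))
        = (Nat.castRingHom ℂ).mapMatrix (assocMatrix τ) from rfl, ← map_pow]
    rfl
  rw [this]; rfl

lemma Mc_abs (τ : A → List A) (k : ℕ) (b a : A) :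
    ‖((Mc τ)^k) b a‖ = ((Mr τ)^k) b a := by
  rw [Mc_pow_cast, Mr_pow_cast]
  simp

section Freq2

variable {τ : A → List A} {x : ℕ → A} {E : ℕ → ℕ} {μ : A → ℝ}
variable (hE0 : E 0 = 0) (hEs : ∀ n, E (n + 1) = E n + (τ (x n)).length)
variable (hfix : ∀ n, occursAt (τ (x n)) x (E n))
variable (hL : ∀ b : A, 1 ≤ (τ b).length)
variable (hμ : ∀ a : A, Tendsto (fun N : ℕ => (uu x N a) / N) atTop (𝓝 (μ a)))

include hE0 hEs hfix hL hμ in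
lemma eigen_pow (k : ℕ) (a : A) :
    ∑ b, μ b * ((Mr τ)^k) b a = (lam0 τ μ)^k * μ a := by
  induction k generalizing a with
  | zero => simp [Matrix.one_apply, mul_ite, Finset.sum_ite_eq', Finset.mem_univ]
  | succ k ih =>
    have hsplit : ∀ b, ((Mr τ)^(k+1)) b a = ∑ c, ((Mr τ)^k) b c * Mr τ c a := by
      intro b; rw [pow_succ, Matrix.mul_apply]
    calc ∑ b, μ b * ((Mr τ)^(k+1)) b a
        = ∑ b, ∑ c, μ b * ((Mr τ)^k) b c * Mr τ c a := by
          refine Finset.sum_congr rfl fun b _ => ?_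
          rw [hsplit b, Finset.mul_sum]
          exact Finset.sum_congr rfl fun c _ => by ring
      _ = ∑ c, ∑ b, μ b * ((Mr τ)^k) b c * Mr τ c a := Finset.sum_comm
      _ = ∑ c, (∑ b, μ b * ((Mr τ)^k) b c) * Mr τ c a := by
          exact Finset.sum_congr rfl fun c _ => by rw [Finset.sum_mul]
      _ = ∑ c, ((lam0 τ μ)^k * μ c) * Mr τ c a := by
          refine Finset.sum_congr rfl fun c _ => by rw [ih c]
      _ = (lam0 τ μ)^k * ∑ c, μ c * Mr τ c a := by
          rw [Finset.mul_sum]; exact Finset.sum_congr rfl fun c _ => by ring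
      _ = (lam0 τ μ)^(k+1) * μ a := by
          rw [eigen hE0 hEs hfix hL hμ a]; ring

include hμ in
lemma exists_mu_pos : ∃ b, 0 < μ b := by
  by_contra hcon
  push_neg at hcon
  have h0 : ∀ b, μ b = 0 := fun b => le_antisymm (hcon b) (mu_nonneg hμ b)
  have := sum_mu (x := x) hμ
  simp [h0] at this

include hL hμ in
lemma lam0_ge_one : 1 ≤ lam0 τ μ := by
  have h1 := sum_mu (x := x) hμ
  rw [lam0, ← h1]
  refine Finset.sum_le_sum fun b _ => ?_
  have h2 : (1:ℝ) ≤ ((τ b).length : ℝ) := by exact_mod_cast hL b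
  have h3 := mu_nonneg hμ b
  nlinarith

include hE0 hEs hfix hL hμ in
lemma mu_pos (hprim : Primitive τ) (a : A) : 0 < μ a := by
  obtain ⟨m, hm1, hm⟩ := primitive_entries hprim
  obtain ⟨b, hb⟩ := exists_mu_pos (x := x) hμ
  have hlam : (0:ℝ) < (lam0 τ μ)^m := by
    have := lam0_ge_one (x := x) (τ := τ) hL hμ
    positivity
  have hb2 : (1:ℝ) ≤ ((Mr τ)^m) b a := by
    rw [Mr_pow_cast]; exact_mod_cast hm b a
  have hkey : μ b * ((Mr τ)^m) b a ≤ (lam0 τ μ)^m * μ a := by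
    rw [← eigen_pow hE0 hEs hfix hL hμ m a]
    refine Finset.single_le_sum (f := fun c => μ c * ((Mr τ)^m) c a) (fun c _ => ?_)
      (Finset.mem_univ b)
    exact mul_nonneg (mu_nonneg hμ c) (Mr_nonneg τ m c a)
  nlinarith

include hE0 hEs hfix hL hμ in
lemma entry_le (hprim : Primitive τ) (n : ℕ) (b a : A) :
    ((Mr τ)^n) b a ≤ (lam0 τ μ)^n * μ a / μ b := by
  have hb := mu_pos hE0 hEs hfix hL hμ hprim b
  rw [le_div_iff₀ hb]
  have hkey : μ b * ((Mr τ)^n) b a ≤ (lam0 τ μ)^n * μ a := by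
    rw [← eigen_pow hE0 hEs hfix hL hμ n a]
    refine Finset.single_le_sum (f := fun c => μ c * ((Mr τ)^n) c a) (fun c _ => ?_)
      (Finset.mem_univ b)
    exact mul_nonneg (mu_nonneg hμ c) (Mr_nonneg τ n c a)
  nlinarith

include hE0 hEs hfix hL hμ in
lemma eigen_c (a : A) :
    ∑ b, (μ b : ℂ) * Mc τ b a = (lam0 τ μ : ℂ) * (μ a : ℂ) := by
  have h := eigen hE0 hEs hfix hL hμ a
  have hcast : ∀ b, (μ b : ℂ) * Mc τ b a = ((μ b * Mr τ b a : ℝ) : ℂ) := by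
    intro b
    have : Mc τ b a = ((Mr τ b a : ℝ) : ℂ) := by
      simp [Mc, Mr, Matrix.map_apply]
    rw [this]; push_cast; ring
  rw [Finset.sum_congr rfl fun b _ => hcast b, ← Complex.ofReal_sum, h]
  push_cast; ring

include hE0 hEs hfix hL hμ in
lemma lam0_mem : (lam0 τ μ : ℂ) ∈ specC τ := by
  rw [specC_eq]
  obtain ⟨b0, hb0⟩ := exists_mu_pos (x := x) hμ
  refine left_eig_mem_spectrum (v := fun a => (μ a : ℂ)) ?_ ?_
  · intro h
    have := congrFun h b0
    simp only [Pi.zero_apply, Complex.ofReal_eq_zero] at this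
    exact hb0.ne' this
  · exact eigen_c hE0 hEs hfix hL hμ

include hE0 hEs hfix hL hμ in
lemma pisot_facts (hPisot : PisotSub τ) :
    1 < lam0 τ μ ∧ ∀ s ∈ specC τ, s ≠ (lam0 τ μ : ℂ) → ‖s‖ < 1 := by
  obtain ⟨μP, hμP, h1, hall⟩ := hPisot
  have hlmem := lam0_mem hE0 hEs hfix hL hμ
  have hl1 : 1 ≤ lam0 τ μ := lam0_ge_one (x := x) (τ := τ) hL hμ
  have habs : ‖(lam0 τ μ : ℂ)‖ = lam0 τ μ := by
    rw [Complex.norm_real, Real.norm_eq_abs, abs_of_pos (by linarith)]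
  have heq : μP = (lam0 τ μ : ℂ) := by
    by_contra hne
    have := hall _ hlmem (Ne.symm hne)
    rw [habs] at this
    linarith
  subst heq
  rw [habs] at h1
  exact ⟨h1, fun s hs hne => hall s hs hne⟩

end Freq2

end S11

namespace S11

set_option linter.unusedSectionVars false

variable {A : Type*} [Fintype A] [DecidableEq A]

lemma left_eig_pow {R : Type*} [CommRing R] {P : Matrix A A R} {t : R} {v : A → R}
    (h : ∀ a, ∑ b, v b * P b a = t * v a) : ∀ (k : ℕ) (a : A),
    ∑ b, v b * (P^k) b a = t^k * v a := by
  intro k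
  induction k with
  | zero => intro a; simp [Matrix.one_apply, mul_ite, Finset.sum_ite_eq', Finset.mem_univ]
  | succ k ih =>
    intro a
    have hsplit : ∀ b, (P^(k+1)) b a = ∑ c, (P^k) b c * P c a := by
      intro b; rw [pow_succ, Matrix.mul_apply]
    calc ∑ b, v b * (P^(k+1)) b a
        = ∑ b, ∑ c, v b * (P^k) b c * P c a := by
          refine Finset.sum_congr rfl fun b _ => ?_
          rw [hsplit b, Finset.mul_sum]
          exact Finset.sum_congr rfl fun c _ => by ring
      _ = ∑ c, ∑ b, v b * (P^k) b c * P c a := Finset.sum_comm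
      _ = ∑ c, (∑ b, v b * (P^k) b c) * P c a := by
          exact Finset.sum_congr rfl fun c _ => by rw [Finset.sum_mul]
      _ = ∑ c, (t^k * v c) * P c a := Finset.sum_congr rfl fun c _ => by rw [ih c]
      _ = t^k * ∑ c, v c * P c a := by
          rw [Finset.mul_sum]; exact Finset.sum_congr rfl fun c _ => by ring
      _ = t^(k+1) * v a := by rw [h a]; ring

noncomputable def Mhat (τ : A → List A) (μ : A → ℝ) : Matrix A A ℝ :=
  Matrix.of fun b a => Mr τ b a - ((τ b).length : ℝ) * μ a

noncomputable def Bc (τ : A → List A) (μ : A → ℝ) : Matrix A A ℂ :=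
  ((Mhat τ μ).map Complex.ofReal).transpose

section Freq3

variable {τ : A → List A} {x : ℕ → A} {E : ℕ → ℕ} {μ : A → ℝ}
variable (hE0 : E 0 = 0) (hEs : ∀ n, E (n + 1) = E n + (τ (x n)).length)
variable (hfix : ∀ n, occursAt (τ (x n)) x (E n))
variable (hL : ∀ b : A, 1 ≤ (τ b).length)
variable (hμ : ∀ a : A, Tendsto (fun N : ℕ => (uu x N a) / N) atTop (𝓝 (μ a)))
variable (hprim : Primitive τ)

include hE0 hEs hfix hL hμ hprim in
lemma perron_real (v : A → ℝ) (hv : ∀ a, ∑ b, v b * Mr τ b a = lam0 τ μ * v a)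
    (hsum : ∑ a, v a = 0) : v = 0 := by
  haveI : Nonempty A := ⟨x 0⟩
  obtain ⟨m, hm1, hm⟩ := primitive_entries hprim
  have hμpos : ∀ a, 0 < μ a := mu_pos hE0 hEs hfix hL hμ hprim
  obtain ⟨astar, -, hstar⟩ :=
    Finset.exists_mem_eq_inf' (Finset.univ_nonempty (α := A)) (fun a => v a / μ a)
  set s := Finset.univ.inf' (Finset.univ_nonempty (α := A)) (fun a => v a / μ a) with hs
  set w : A → ℝ := fun a => v a - s * μ a with hw
  have hwnn : ∀ a, 0 ≤ w a := by
    intro a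
    have h1 : s ≤ v a / μ a := Finset.inf'_le _ (Finset.mem_univ a)
    have h2 : s * μ a ≤ v a := (le_div_iff₀ (hμpos a)).mp h1
    simp only [hw]; linarith
  have hwstar : w astar = 0 := by
    have hne := (hμpos astar).ne'
    have h9 : w astar = v astar - (v astar / μ astar) * μ astar := by
      rw [hw]; rw [hstar]
    rw [h9]
    field_simp
    ring
  have hweig : ∀ a, ∑ b, w b * Mr τ b a = lam0 τ μ * w a := by
    intro a
    have h2 := eigen hE0 hEs hfix hL hμ a
    have h3 : ∑ b, w b * Mr τ b a
        = (∑ b, v b * Mr τ b a) - s * (∑ b, μ b * Mr τ b a) := by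
      rw [Finset.mul_sum, ← Finset.sum_sub_distrib]
      exact Finset.sum_congr rfl fun b _ => by simp only [hw]; ring
    rw [h3, hv a, h2]
    simp only [hw]; ring
  have hwpow := left_eig_pow hweig m astar
  rw [hwstar, mul_zero] at hwpow
  have hwzero : ∀ b, w b = 0 := by
    have hterms := (Finset.sum_eq_zero_iff_of_nonneg (fun b _ =>
      mul_nonneg (hwnn b) (Mr_nonneg τ m b astar))).mp hwpow
    intro b
    have h4 := hterms b (Finset.mem_univ b)
    have h5 : (1:ℝ) ≤ ((Mr τ)^m) b astar := by
      rw [Mr_pow_cast]; exact_mod_cast hm b astar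
    by_contra hb
    have : 0 < w b := lt_of_le_of_ne (hwnn b) (Ne.symm hb)
    nlinarith
  have hveq : ∀ a, v a = s * μ a := by
    intro a
    have := hwzero a
    simp only [hw] at this
    linarith
  have hs0 : s = 0 := by
    have h6 : ∑ a, v a = s * ∑ a, μ a := by
      rw [Finset.mul_sum]
      exact Finset.sum_congr rfl fun a _ => hveq a
    rw [hsum, sum_mu (x := x) hμ] at h6
    linarith
  funext a
  rw [hveq a, hs0]
  simp

include hE0 hEs hfix hL hμ hprim in
lemma perron_complex (v : A → ℂ)
    (hv : ∀ a, ∑ b, v b * Mc τ b a = (lam0 τ μ : ℂ) * v a)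
    (hsum : ∑ a, v a = 0) : v = 0 := by
  have hMc : ∀ b a, Mc τ b a = ((Mr τ b a : ℝ) : ℂ) := by
    intro b a; simp [Mc, Mr, Matrix.map_apply]
  have hre : (fun a => (v a).re) = 0 := by
    apply perron_real hE0 hEs hfix hL hμ hprim
    · intro a
      have := congrArg Complex.re (hv a)
      rw [Complex.re_sum] at this
      simp only [hMc, Complex.mul_re, Complex.ofReal_re, Complex.ofReal_im, mul_zero,
        sub_zero] at this
      rw [this]; ring
    · have := congrArg Complex.re hsum
      rw [Complex.re_sum] at this
      simpa using this
  have him : (fun a => (v a).im) = 0 := by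
    apply perron_real hE0 hEs hfix hL hμ hprim
    · intro a
      have := congrArg Complex.im (hv a)
      rw [Complex.im_sum] at this
      simp only [hMc, Complex.mul_im, Complex.ofReal_re, Complex.ofReal_im, mul_zero,
        add_zero, zero_mul] at this
      rw [← this]
      exact Finset.sum_congr rfl fun b _ => by ring
    · have := congrArg Complex.im hsum
      rw [Complex.im_sum] at this
      simpa using this
  funext a
  have h1 := congrFun hre a
  have h2 := congrFun him a
  simp only [Pi.zero_apply] at h1 h2 ⊢
  exact Complex.ext h1 h2

end Freq3

end S11

namespace S11

set_option linter.unusedSectionVars false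

variable {A : Type*} [Fintype A] [DecidableEq A]

section Freq4

variable {τ : A → List A} {x : ℕ → A} {E : ℕ → ℕ} {μ : A → ℝ}
variable (hE0 : E 0 = 0) (hEs : ∀ n, E (n + 1) = E n + (τ (x n)).length)
variable (hfix : ∀ n, occursAt (τ (x n)) x (E n))
variable (hL : ∀ b : A, 1 ≤ (τ b).length)
variable (hμ : ∀ a : A, Tendsto (fun N : ℕ => (uu x N a) / N) atTop (𝓝 (μ a)))
variable (hprim : Primitive τ) (hPisot : PisotSub τ)

include hE0 hEs hfix hL hμ hprim hPisot in
lemma spec_Bc_lt_one : ∀ t ∈ spectrum ℂ (Bc τ μ), ‖t‖ < 1 := by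
  haveI : Nonempty A := ⟨x 0⟩
  intro t ht
  by_contra hcon
  push_neg at hcon
  have hMc : ∀ b a, Mc τ b a = ((Mr τ b a : ℝ) : ℂ) := by
    intro b a; simp [Mc, Mr, Matrix.map_apply]
  obtain ⟨hlam1, hspec⟩ := pisot_facts hE0 hEs hfix hL hμ hPisot
  set lam := lam0 τ μ with hlamdef
  have hlampos : (0:ℝ) < lam := by linarith
  obtain ⟨v, hv0, hveq⟩ := spectrum_exists_eigvec ht
  have hveq' : ∀ a, ∑ b, v b * (Mc τ b a - ((τ b).length : ℂ) * (μ a : ℝ)) = t * v a := by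
    intro a
    rw [← hveq a]
    refine Finset.sum_congr rfl fun b _ => ?_
    have hBc : Bc τ μ a b = Mc τ b a - ((τ b).length : ℂ) * (μ a : ℝ) := by
      simp only [Bc, Matrix.transpose_apply, Matrix.map_apply, Mhat, Matrix.of_apply, hMc]
      push_cast
      ring
    rw [hBc]
    ring
  set c : ℂ := ∑ b, v b * ((τ b).length : ℂ) with hc
  have hkey : ∀ a, ∑ b, v b * Mc τ b a = t * v a + c * (μ a : ℂ) := by
    intro a
    have h1 := hveq' a
    rw [Finset.sum_congr rfl (fun b _ => by ring : ∀ b ∈ Finset.univ,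
      v b * (Mc τ b a - ((τ b).length : ℂ) * (μ a : ℝ))
        = v b * Mc τ b a - (v b * ((τ b).length : ℂ)) * (μ a : ℂ)),
      Finset.sum_sub_distrib, ← Finset.sum_mul, ← hc] at h1
    linear_combination h1
  have hrowsum : ∀ b, ∑ a, Mc τ b a = ((τ b).length : ℂ) := by
    intro b
    have h2 := length_eq_sum_count (τ b)
    have : ∀ a, Mc τ b a = (((τ b).count a : ℕ) : ℂ) := fun a => rfl
    rw [Finset.sum_congr rfl fun a _ => this a]
    rw [show ((τ b).length : ℂ) = ((((τ b).length : ℕ)) : ℂ) from rfl, h2]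
    push_cast
    rfl
  have hsummu : ∑ a, (μ a : ℂ) = 1 := by
    rw [← Complex.ofReal_sum, sum_mu (x := x) hμ, Complex.ofReal_one]
  have htne : t ≠ 0 := by
    intro h0
    rw [h0] at hcon
    simp at hcon
    linarith
  have hsumv : ∑ a, v a = 0 := by
    have h3 : ∑ a, ∑ b, v b * Mc τ b a = ∑ a, (t * v a + c * (μ a : ℂ)) :=
      Finset.sum_congr rfl fun a _ => hkey a
    rw [Finset.sum_comm] at h3
    have h4 : ∑ b, ∑ a, v b * Mc τ b a = c := by
      rw [hc]
      refine Finset.sum_congr rfl fun b _ => ?_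
      rw [← Finset.mul_sum, hrowsum b]
    rw [h4] at h3
    have h5 : ∑ a, (t * v a + c * (μ a : ℂ)) = t * (∑ a, v a) + c := by
      rw [Finset.sum_add_distrib, ← Finset.mul_sum, ← Finset.mul_sum, hsummu, mul_one]
    rw [h5] at h3
    have h6 : t * (∑ a, v a) = 0 := by linear_combination -h3
    rcases mul_eq_zero.mp h6 with h | h
    · exact absurd h htne
    · exact h
  by_cases hteq : t = (lam : ℂ)
  · by_cases hczero : c = 0
    · exact hv0 (perron_complex hE0 hEs hfix hL hμ hprim v
        (fun a => by rw [hkey a, hczero, hteq]; ring) hsumv)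
    · -- growth contradiction
      have hgrow : ∀ n : ℕ, ∀ a, ∑ b, v b * ((Mc τ)^(n+1)) b a
          = (lam : ℂ)^(n+1) * v a + ((n+1 : ℕ) : ℂ) * c * (lam : ℂ)^n * (μ a : ℂ) := by
        intro n
        induction n with
        | zero =>
          intro a
          have := hkey a
          rw [hteq] at this
          simpa using this
        | succ n ih =>
          intro a
          have hsplit : ∀ b, ((Mc τ)^(n+2)) b a = ∑ d, ((Mc τ)^(n+1)) b d * Mc τ d a := by
            intro b; rw [pow_succ, Matrix.mul_apply]
          have heigc := eigen_c hE0 hEs hfix hL hμ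
          calc ∑ b, v b * ((Mc τ)^(n+2)) b a
              = ∑ b, ∑ d, v b * ((Mc τ)^(n+1)) b d * Mc τ d a := by
                refine Finset.sum_congr rfl fun b _ => ?_
                rw [hsplit b, Finset.mul_sum]
                exact Finset.sum_congr rfl fun d _ => by ring
            _ = ∑ d, ∑ b, v b * ((Mc τ)^(n+1)) b d * Mc τ d a := Finset.sum_comm
            _ = ∑ d, (∑ b, v b * ((Mc τ)^(n+1)) b d) * Mc τ d a :=
                Finset.sum_congr rfl fun d _ => by rw [Finset.sum_mul]
            _ = ∑ d, ((lam : ℂ)^(n+1) * v d + ((n+1 : ℕ) : ℂ) * c * (lam : ℂ)^n * (μ d : ℂ))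
                  * Mc τ d a := Finset.sum_congr rfl fun d _ => by rw [ih d]
            _ = (lam : ℂ)^(n+1) * (∑ d, v d * Mc τ d a)
                  + ((n+1 : ℕ) : ℂ) * c * (lam : ℂ)^n * (∑ d, (μ d : ℂ) * Mc τ d a) := by
                rw [Finset.sum_congr rfl (fun d _ => by ring :
                    ∀ d ∈ Finset.univ, ((lam : ℂ)^(n+1) * v d
                      + ((n+1 : ℕ) : ℂ) * c * (lam : ℂ)^n * (μ d : ℂ)) * Mc τ d a
                    = (lam : ℂ)^(n+1) * (v d * Mc τ d a)
                      + ((n+1 : ℕ) : ℂ) * c * (lam : ℂ)^n * ((μ d : ℂ) * Mc τ d a)),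
                  Finset.sum_add_distrib, ← Finset.mul_sum, ← Finset.mul_sum]
            _ = (lam : ℂ)^(n+2) * v a + ((n+2 : ℕ) : ℂ) * c * (lam : ℂ)^(n+1) * (μ a : ℂ) := by
                rw [hkey a, heigc a, hteq]
                push_cast
                ring
      obtain ⟨a0⟩ := (inferInstance : Nonempty A)
      have hμ0 := mu_pos hE0 hEs hfix hL hμ hprim
      set Cv : ℝ := ∑ b, ‖v b‖ / μ b with hCv
      have hClhs : ∀ n : ℕ, ‖∑ b, v b * ((Mc τ)^(n+1)) b a0‖
          ≤ lam^(n+1) * Cv * μ a0 := by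
        intro n
        calc ‖∑ b, v b * ((Mc τ)^(n+1)) b a0‖
            ≤ ∑ b, ‖v b * ((Mc τ)^(n+1)) b a0‖ := by
              exact norm_sum_le _ _
          _ = ∑ b, ‖v b‖ * ((Mr τ)^(n+1)) b a0 := by
              refine Finset.sum_congr rfl fun b _ => ?_
              rw [norm_mul, Mc_abs]
          _ ≤ ∑ b, ‖v b‖ * (lam^(n+1) * μ a0 / μ b) := by
              refine Finset.sum_le_sum fun b _ => ?_
              exact mul_le_mul_of_nonneg_left
                (entry_le hE0 hEs hfix hL hμ hprim (n+1) b a0) (norm_nonneg _)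
          _ = lam^(n+1) * Cv * μ a0 := by
              rw [hCv, Finset.mul_sum, Finset.sum_mul]
              exact Finset.sum_congr rfl fun b _ => by ring
      have hfinal : ∀ n : ℕ, ((n:ℝ)+1) * (‖c‖ * μ a0)
          ≤ lam * (Cv * μ a0 + ‖v a0‖) := by
        intro n
        have h7 := hgrow n a0
        have h8 : ‖((n+1 : ℕ) : ℂ) * c * (lam : ℂ)^n * (μ a0 : ℂ)‖
            - ‖(lam : ℂ)^(n+1) * v a0‖
            ≤ ‖∑ b, v b * ((Mc τ)^(n+1)) b a0‖ := by
          rw [h7]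
          set X : ℂ := (lam : ℂ)^(n+1) * v a0 with hX
          set Y : ℂ := ((n+1 : ℕ) : ℂ) * c * (lam : ℂ)^n * (μ a0 : ℂ) with hY
          have htri := norm_add_le (X + Y) (-X)
          have hXY : X + Y + -X = Y := by ring
          rw [hXY, norm_neg] at htri
          linarith
        have h9 : ‖((n+1 : ℕ) : ℂ) * c * (lam : ℂ)^n * (μ a0 : ℂ)‖
            = ((n:ℝ)+1) * ‖c‖ * lam^n * μ a0 := by
          rw [norm_mul, norm_mul, norm_mul, norm_pow, Complex.norm_natCast, Complex.norm_real,
            Complex.norm_real, Real.norm_eq_abs, Real.norm_eq_abs, abs_of_pos hlampos, abs_of_pos (hμ0 a0)]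
          push_cast
          ring
        have h10 : ‖(lam : ℂ)^(n+1) * v a0‖ = lam^(n+1) * ‖v a0‖ := by
          rw [norm_mul, norm_pow, Complex.norm_real, Real.norm_eq_abs, abs_of_pos hlampos]
        have h11 := hClhs n
        rw [h9, h10] at h8
        have h12 : ((n:ℝ)+1) * ‖c‖ * lam^n * μ a0
            ≤ lam^(n+1) * Cv * μ a0 + lam^(n+1) * ‖v a0‖ := by linarith
        have hlamn : (0:ℝ) < lam^n := by positivity
        have h13 : lam^(n+1) = lam^n * lam := by ring
        rw [h13] at h12
        have h14 : lam^n * (((n:ℝ)+1) * (‖c‖ * μ a0))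
            ≤ lam^n * (lam * (Cv * μ a0 + ‖v a0‖)) := by linarith
        exact le_of_mul_le_mul_left h14 hlamn
      have hcabs : 0 < ‖c‖ * μ a0 :=
        mul_pos (norm_pos_iff.mpr hczero) (hμ0 a0)
      obtain ⟨n, hn⟩ := exists_nat_gt
        (lam * (Cv * μ a0 + ‖v a0‖) / (‖c‖ * μ a0))
      have h15 := hfinal n
      have h16 : ((n:ℝ)+1) ≤ lam * (Cv * μ a0 + ‖v a0‖) / (‖c‖ * μ a0) :=
        (le_div_iff₀ hcabs).mpr h15
      linarith
  · by_cases hczero : c = 0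
    · have hmem : t ∈ specC τ := by
        rw [specC_eq]
        exact left_eig_mem_spectrum hv0 (fun a => by rw [hkey a, hczero]; ring)
      exact absurd (hspec t hmem hteq) (not_lt.mpr hcon)
    · set d : ℂ := c / (t - (lam : ℂ)) with hd
      have htl : t - (lam : ℂ) ≠ 0 := sub_ne_zero.mpr hteq
      set w : A → ℂ := fun a => v a + d * (μ a : ℂ) with hw
      have hweq : ∀ a, ∑ b, w b * Mc τ b a = t * w a := by
        intro a
        have heigc := eigen_c hE0 hEs hfix hL hμ a
        have h16 : ∑ b, w b * Mc τ b a
            = (∑ b, v b * Mc τ b a) + d * (∑ b, (μ b : ℂ) * Mc τ b a) := by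
          rw [Finset.mul_sum, ← Finset.sum_add_distrib]
          exact Finset.sum_congr rfl fun b _ => by simp only [hw]; ring
        rw [h16, hkey a, heigc]
        simp only [hw]
        rw [hd]
        field_simp
        ring
      have hw0 : w ≠ 0 := by
        intro h17
        have h18 : ∀ a, v a = -d * (μ a : ℂ) := by
          intro a
          have := congrFun h17 a
          simp only [hw, Pi.zero_apply] at this
          linear_combination this
        have h19 : ∑ a, v a = -d := by
          rw [Finset.sum_congr rfl fun a _ => h18 a, ← Finset.mul_sum, hsummu, mul_one]
        rw [hsumv] at h19
        have : d = 0 := neg_eq_zero.mp h19.symm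
        rw [hd] at this
        rcases div_eq_zero_iff.mp this with h | h
        · exact hczero h
        · exact htl h
      have hmem : t ∈ specC τ := by
        rw [specC_eq]
        exact left_eig_mem_spectrum hw0 hweq
      exact absurd (hspec t hmem hteq) (not_lt.mpr hcon)

end Freq4

end S11

namespace S11

set_option linter.unusedSectionVars false
set_option maxHeartbeats 1000000

attribute [local instance] Matrix.linftyOpNormedRing Matrix.linftyOpNormedAlgebra

open scoped NNReal ENNReal

variable {A : Type*} [Fintype A] [DecidableEq A]

lemma Bc_pow (τ : A → List A) (μ : A → ℝ) (n : ℕ) :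
    (Bc τ μ)^n = (((Mhat τ μ)^n).map Complex.ofReal).transpose := by
  rw [Bc, ← Matrix.transpose_pow]
  congr 1
  rw [show (Mhat τ μ).map Complex.ofReal = Complex.ofRealHom.mapMatrix (Mhat τ μ) from rfl,
    ← map_pow]
  rfl

lemma row_sum_le_opNorm (Q : Matrix A A ℂ) (i : A) : ∑ j, ‖Q i j‖ ≤ ‖Q‖ := by
  rw [Matrix.linfty_opNorm_def]
  have h1 : (∑ j, ‖Q i j‖₊ : ℝ≥0) ≤ (Finset.univ : Finset A).sup fun i => ∑ j, ‖Q i j‖₊ :=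
    Finset.le_sup (f := fun i : A => ∑ j, ‖Q i j‖₊) (Finset.mem_univ i)
  calc ∑ j, ‖Q i j‖ = ((∑ j, ‖Q i j‖₊ : ℝ≥0) : ℝ) := by
        push_cast
        exact Finset.sum_congr rfl fun j _ => rfl
    _ ≤ _ := by exact_mod_cast h1

section Freq5

variable {τ : A → List A} {x : ℕ → A} {E : ℕ → ℕ} {μ : A → ℝ}
variable (hE0 : E 0 = 0) (hEs : ∀ n, E (n + 1) = E n + (τ (x n)).length)
variable (hfix : ∀ n, occursAt (τ (x n)) x (E n))
variable (hL : ∀ b : A, 1 ≤ (τ b).length)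
variable (hμ : ∀ a : A, Tendsto (fun N : ℕ => (uu x N a) / N) atTop (𝓝 (μ a)))
variable (hprim : Primitive τ) (hPisot : PisotSub τ)

include hE0 hEs hfix hL hμ hprim hPisot in
lemma hat_pow_bound : ∃ cst ρ : ℝ, 1 ≤ cst ∧ 0 < ρ ∧ ρ < 1 ∧
    ∀ (n : ℕ) (a : A), ∑ b, |((Mhat τ μ)^n) b a| ≤ cst * ρ^n := by
  haveI : Nonempty A := ⟨x 0⟩
  haveI : CompleteSpace (Matrix A A ℂ) := FiniteDimensional.complete ℂ _
  haveI : Nontrivial (Matrix A A ℂ) := by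
    refine ⟨0, 1, fun h => ?_⟩
    have := congrFun (congrFun h (x 0)) (x 0)
    rw [Matrix.zero_apply, Matrix.one_apply_eq] at this
    exact zero_ne_one this
  have hsr : spectralRadius ℂ (Bc τ μ) < (1 : ℝ≥0) := by
    apply spectrum.spectralRadius_lt_of_forall_lt
    intro z hz
    have h1 := spec_Bc_lt_one hE0 hEs hfix hL hμ hprim hPisot z hz
    rw [← NNReal.coe_lt_coe]
    rw [coe_nnnorm]
    exact_mod_cast h1
  obtain ⟨ρ, hρ1, hρ2⟩ := ENNReal.lt_iff_exists_nnreal_btwn.mp hsr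
  have hρlt1 : (ρ : ℝ) < 1 := by exact_mod_cast hρ2
  have htend := spectrum.pow_nnnorm_pow_one_div_tendsto_nhds_spectralRadius (Bc τ μ)
  have hev : ∀ᶠ n : ℕ in atTop, (‖(Bc τ μ)^n‖₊ : ℝ≥0∞) ^ (1/(n:ℝ)) < (ρ : ℝ≥0∞) :=
    htend.eventually_lt_const hρ1
  obtain ⟨n₀, hn₀⟩ := eventually_atTop.mp hev
  set n₁ := max n₀ 1 with hn₁
  have hkey : ∀ n, n₁ ≤ n → ‖(Bc τ μ)^n‖ ≤ (ρ:ℝ)^n := by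
    intro n hn
    have hne : (n:ℝ) ≠ 0 := by
      have : 1 ≤ n := le_trans (le_max_right _ _) hn
      positivity
    have h2 := hn₀ n (le_trans (le_max_left _ _) hn)
    have h3 : ((‖(Bc τ μ)^n‖₊ : ℝ≥0∞) ^ (1/(n:ℝ))) ^ (n:ℝ) ≤ (ρ : ℝ≥0∞) ^ (n:ℝ) :=
      ENNReal.rpow_le_rpow (le_of_lt h2) (by positivity)
    rw [← ENNReal.rpow_mul, one_div, inv_mul_cancel₀ hne, ENNReal.rpow_one] at h3
    rw [ENNReal.rpow_natCast, ← ENNReal.coe_pow] at h3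
    have h4 : ‖(Bc τ μ)^n‖₊ ≤ ρ^n := by exact_mod_cast h3
    calc ‖(Bc τ μ)^n‖ = ((‖(Bc τ μ)^n‖₊ : ℝ≥0) : ℝ) := rfl
      _ ≤ ((ρ^n : ℝ≥0) : ℝ) := by exact_mod_cast h4
      _ = (ρ:ℝ)^n := by push_cast; rfl
  set ρr : ℝ := max (ρ:ℝ) (1/2) with hρr
  have hρrpos : 0 < ρr := lt_of_lt_of_le (by norm_num) (le_max_right _ _)
  have hρrlt1 : ρr < 1 := max_lt hρlt1 (by norm_num)
  set S : ℝ := ∑ k ∈ Finset.range (n₁+1), ‖(Bc τ μ)^k‖ with hS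
  have hSnn : 0 ≤ S := Finset.sum_nonneg fun k _ => norm_nonneg _
  set cst : ℝ := S / ρr^n₁ + 1 with hcst
  have hcst1 : 1 ≤ cst := by
    have h0 : 0 ≤ S / ρr^n₁ := by positivity
    rw [hcst]; linarith
  clear_value n₁ S ρr cst
  refine ⟨cst, ρr, hcst1, hρrpos, hρrlt1, ?_⟩
  intro n a
  have hrow : ∑ b, |((Mhat τ μ)^n) b a| ≤ ‖(Bc τ μ)^n‖ := by
    have hentry : ∀ b, ((Bc τ μ)^n) a b = Complex.ofReal (((Mhat τ μ)^n) b a) := by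
      intro b; rw [Bc_pow]; rfl
    calc ∑ b, |((Mhat τ μ)^n) b a|
        = ∑ b, ‖((Bc τ μ)^n) a b‖ := by
          refine Finset.sum_congr rfl fun b _ => ?_
          rw [hentry b, Complex.norm_real, Real.norm_eq_abs]
      _ ≤ _ := row_sum_le_opNorm _ a
  have hnorm : ‖(Bc τ μ)^n‖ ≤ cst * ρr^n := by
    rcases le_or_gt n₁ n with hcase | hcase
    · calc ‖(Bc τ μ)^n‖ ≤ (ρ:ℝ)^n := hkey n hcase
        _ ≤ ρr^n := pow_le_pow_left₀ (by positivity) (by rw [hρr]; exact le_max_left _ _) n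
        _ ≤ cst * ρr^n := by nlinarith [pow_pos hρrpos n]
    · have h6 : ‖(Bc τ μ)^n‖ ≤ S := by
        rw [hS]
        exact Finset.single_le_sum (f := fun k => ‖(Bc τ μ)^k‖)
          (fun k _ => norm_nonneg _) (Finset.mem_range.mpr (by omega))
      have h7 : ρr^n₁ ≤ ρr^n := pow_le_pow_of_le_one (le_of_lt hρrpos)
        (le_of_lt hρrlt1) (by omega)
      calc ‖(Bc τ μ)^n‖ ≤ S := h6
        _ = (S / ρr^n₁) * ρr^n₁ := by field_simp
        _ ≤ (S / ρr^n₁) * ρr^n := by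
            have : 0 ≤ S / ρr^n₁ := by positivity
            nlinarith
        _ ≤ cst * ρr^n := by
            have : 0 ≤ ρr^n := by positivity
            nlinarith
  linarith

end Freq5

end S11

namespace S11

set_option linter.unusedSectionVars false

variable {A : Type*} [Fintype A] [DecidableEq A]

def Good (Mh : Matrix A A ℝ) (B₀ R₀ : ℝ) : ℕ → (A → ℝ) → Prop
  | 0, v => ∀ a, |v a| ≤ B₀
  | k+1, v => ∃ w r : A → ℝ, Good Mh B₀ R₀ k w ∧ (∀ a, |r a| ≤ R₀) ∧
      ∀ a, v a = ∑ b, w b * Mh b a + r a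

lemma good_bound {Mh : Matrix A A ℝ} {B₀ R₀ cst ρ : ℝ}
    (hB₀ : 0 ≤ B₀) (hR₀ : 0 ≤ R₀) (hcst : 0 ≤ cst) (hρ0 : 0 < ρ) (hρ1 : ρ < 1)
    (hbound : ∀ (n : ℕ) (a : A), ∑ b, |(Mh^n) b a| ≤ cst * ρ^n) :
    ∀ k v, Good Mh B₀ R₀ k v → ∀ (j : ℕ) (a : A),
      |∑ b, v b * (Mh^j) b a| ≤ B₀ * cst * ρ^(k+j) + R₀ * cst * ρ^j / (1 - ρ) := by
  have h1ρ : (0:ℝ) < 1 - ρ := by linarith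
  intro k
  induction k with
  | zero =>
    intro v hv j a
    have hv' : ∀ a, |v a| ≤ B₀ := hv
    have h1 : |∑ b, v b * (Mh^j) b a| ≤ ∑ b, |v b| * |(Mh^j) b a| := by
      refine (Finset.abs_sum_le_sum_abs _ _).trans (le_of_eq ?_)
      exact Finset.sum_congr rfl fun b _ => abs_mul _ _
    have h2 : ∑ b, |v b| * |(Mh^j) b a| ≤ ∑ b, B₀ * |(Mh^j) b a| :=
      Finset.sum_le_sum fun b _ => mul_le_mul_of_nonneg_right (hv' b) (abs_nonneg _)
    have h3 : ∑ b, B₀ * |(Mh^j) b a| = B₀ * ∑ b, |(Mh^j) b a| := by rw [Finset.mul_sum]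
    have h4 : B₀ * ∑ b, |(Mh^j) b a| ≤ B₀ * (cst * ρ^j) :=
      mul_le_mul_of_nonneg_left (hbound j a) hB₀
    have h5 : 0 ≤ R₀ * cst * ρ^j / (1 - ρ) := by positivity
    have h6 : (0:ℕ) + j = j := by omega
    rw [h6]
    linarith
  | succ k ih =>
    intro v hv j a
    obtain ⟨w, r, hw, hr, heq⟩ := hv
    have hsplit : ∑ b, v b * (Mh^j) b a
        = (∑ c, w c * (Mh^(j+1)) c a) + ∑ b, r b * (Mh^j) b a := by
      have e1 : ∀ c, (Mh^(j+1)) c a = ∑ b, Mh c b * (Mh^j) b a := by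
        intro c; rw [pow_succ', Matrix.mul_apply]
      calc ∑ b, v b * (Mh^j) b a
          = ∑ b, ((∑ c, w c * Mh c b) * (Mh^j) b a + r b * (Mh^j) b a) := by
            refine Finset.sum_congr rfl fun b _ => ?_
            rw [heq b]; ring
        _ = (∑ b, (∑ c, w c * Mh c b) * (Mh^j) b a) + ∑ b, r b * (Mh^j) b a :=
            Finset.sum_add_distrib
        _ = (∑ c, w c * (Mh^(j+1)) c a) + ∑ b, r b * (Mh^j) b a := by
            congr 1
            calc ∑ b, (∑ c, w c * Mh c b) * (Mh^j) b a
                = ∑ b, ∑ c, w c * (Mh c b * (Mh^j) b a) := by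
                  refine Finset.sum_congr rfl fun b _ => ?_
                  rw [Finset.sum_mul]
                  exact Finset.sum_congr rfl fun c _ => by ring
              _ = ∑ c, ∑ b, w c * (Mh c b * (Mh^j) b a) := Finset.sum_comm
              _ = ∑ c, w c * (Mh^(j+1)) c a := by
                  refine Finset.sum_congr rfl fun c _ => ?_
                  rw [e1 c, Finset.mul_sum]
    have hih := ih w hw (j+1) a
    have hrb : |∑ b, r b * (Mh^j) b a| ≤ R₀ * (cst * ρ^j) := by
      have h1 : |∑ b, r b * (Mh^j) b a| ≤ ∑ b, |r b| * |(Mh^j) b a| := by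
        refine (Finset.abs_sum_le_sum_abs _ _).trans (le_of_eq ?_)
        exact Finset.sum_congr rfl fun b _ => abs_mul _ _
      have h2 : ∑ b, |r b| * |(Mh^j) b a| ≤ ∑ b, R₀ * |(Mh^j) b a| :=
        Finset.sum_le_sum fun b _ => mul_le_mul_of_nonneg_right (hr b) (abs_nonneg _)
      have h3 : ∑ b, R₀ * |(Mh^j) b a| ≤ R₀ * (cst * ρ^j) := by
        rw [← Finset.mul_sum]
        exact mul_le_mul_of_nonneg_left (hbound j a) hR₀
      linarith
    have htri : |∑ b, v b * (Mh^j) b a|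
        ≤ |∑ c, w c * (Mh^(j+1)) c a| + |∑ b, r b * (Mh^j) b a| := by
      rw [hsplit]; exact abs_add_le _ _
    have hfe : R₀ * cst * ρ^(j+1) / (1 - ρ) + R₀ * (cst * ρ^j) = R₀ * cst * ρ^j / (1 - ρ) := by
      field_simp
      ring
    have hexp : k + (j+1) = (k+1) + j := by omega
    rw [hexp] at hih
    linarith

end S11

namespace S11

set_option linter.unusedSectionVars false

variable {A : Type*} [Fintype A] [DecidableEq A]

noncomputable def Dv (x : ℕ → A) (μ : A → ℝ) (N : ℕ) (a : A) : ℝ := uu x N a - N * μ a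

section Freq6

variable {τ : A → List A} {x : ℕ → A} {E : ℕ → ℕ} {μ : A → ℝ}
variable (hE0 : E 0 = 0) (hEs : ∀ n, E (n + 1) = E n + (τ (x n)).length)
variable (hfix : ∀ n, occursAt (τ (x n)) x (E n))
variable (hL : ∀ b : A, 1 ≤ (τ b).length)
variable (hμ : ∀ a : A, Tendsto (fun N : ℕ => (uu x N a) / N) atTop (𝓝 (μ a)))

include hE0 hEs hfix hL hμ in
lemma step_rec (K : ℝ) (hK : ∀ b : A, ((τ b).length : ℝ) ≤ K)
    {n N : ℕ} (h1 : E n ≤ N) (h2 : N < E (n + 1)) :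
    ∃ r : A → ℝ, (∀ a, |r a| ≤ K) ∧
      ∀ a, Dv x μ N a = ∑ b, Dv x μ n b * Mhat τ μ b a + r a := by
  refine ⟨fun a => Dv x μ N a - ∑ b, Dv x μ n b * Mhat τ μ b a, ?_, fun a => by ring⟩
  intro a
  have hMain : ∑ b, Dv x μ n b * Mhat τ μ b a = uu x (E n) a - (E n : ℝ) * μ a := by
    have e1 := uu_E hE0 hEs hfix n a
    have e2 := E_cast_eq hE0 hEs hfix (x := x) n
    have e3 := eigen hE0 hEs hfix hL hμ a
    have hterm : ∀ b, Dv x μ n b * Mhat τ μ b a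
        = (uu x n b * Mr τ b a - (uu x n b * ((τ b).length : ℝ)) * μ a)
          - ((n:ℝ) * (μ b * Mr τ b a) - (n:ℝ) * μ a * (μ b * ((τ b).length : ℝ))) := by
      intro b
      simp only [Dv, Mhat, Matrix.of_apply]
      ring
    rw [Finset.sum_congr rfl fun b _ => hterm b, Finset.sum_sub_distrib,
      Finset.sum_sub_distrib, Finset.sum_sub_distrib, ← Finset.sum_mul,
      ← Finset.mul_sum, ← Finset.mul_sum]
    rw [← e1]
    have e4 : ∑ b, uu x n b * ((τ b).length : ℝ) = (E n : ℝ) := e2.symm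
    rw [e4, e3]
    rw [show (∑ b, μ b * ((τ b).length : ℝ)) = lam0 τ μ from rfl]
    ring
  show |Dv x μ N a - ∑ b, Dv x μ n b * Mhat τ μ b a| ≤ K
  rw [hMain]
  have hq1 : uu x (E n) a ≤ uu x N a := by
    have := count_pref_mono x h1 a
    simp only [uu]
    exact_mod_cast this
  have hq2 : uu x N a ≤ uu x (E n) a + ((N - E n : ℕ) : ℝ) := by
    have := count_pref_le x h1 a
    simp only [uu]
    exact_mod_cast this
  have hd : ((N - E n : ℕ) : ℝ) = (N : ℝ) - (E n : ℝ) := by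
    push_cast [Nat.cast_sub h1]
    ring
  have hdK : (N : ℝ) - (E n : ℝ) ≤ K := by
    have h3 := hEs n
    have h4 : (N : ℝ) < (E n : ℝ) + ((τ (x n)).length : ℝ) := by
      have : N < E n + (τ (x n)).length := by omega
      exact_mod_cast this
    have := hK (x n)
    linarith
  have hdnn : (0:ℝ) ≤ (N : ℝ) - (E n : ℝ) := by
    have : (E n : ℝ) ≤ (N : ℝ) := by exact_mod_cast h1
    linarith
  have hμa0 := mu_nonneg hμ a
  have hμa1 := mu_le_one (x := x) hμ a
  rw [hd] at hq2
  rw [abs_le]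
  constructor
  · have hx1 : ((N:ℝ) - E n) * μ a ≤ ((N:ℝ) - E n) := by nlinarith
    simp only [Dv]
    nlinarith
  · have hx2 : 0 ≤ ((N:ℝ) - E n) * μ a := mul_nonneg hdnn hμa0
    simp only [Dv]
    nlinarith

end Freq6

end S11

namespace S11

set_option linter.unusedSectionVars false

variable {A : Type*} [Fintype A] [DecidableEq A]

section Freq7

variable {τ : A → List A} {x : ℕ → A} {E : ℕ → ℕ} {μ : A → ℝ}
variable (hE0 : E 0 = 0) (hEs : ∀ n, E (n + 1) = E n + (τ (x n)).length)
variable (hfix : ∀ n, occursAt (τ (x n)) x (E n))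
variable (hL : ∀ b : A, 1 ≤ (τ b).length)
variable (hμ : ∀ a : A, Tendsto (fun N : ℕ => (uu x N a) / N) atTop (𝓝 (μ a)))
variable (hprim : Primitive τ) (hPisot : PisotSub τ)

include hE0 hEs hfix in
lemma pref_subPow : ∀ m, ∃ Nm, pref x Nm = subPow τ m (x 0) := by
  intro m
  induction m with
  | zero =>
    refine ⟨1, ?_⟩
    show List.ofFn (fun k : Fin 1 => x k) = [x 0]
    simp [List.ofFn_succ]
  | succ m ih =>
    obtain ⟨Nm, hNm⟩ := ih
    exact ⟨E Nm, by rw [pref_E hE0 hEs hfix, hNm]; rfl⟩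

include hE0 hEs hfix hL hμ hprim hPisot in
lemma exists_two : ∃ p, 2 ≤ (τ (x p)).length := by
  obtain ⟨hlam1, -⟩ := pisot_facts hE0 hEs hfix hL hμ hPisot
  have hc : ∃ c : A, 2 ≤ (τ c).length := by
    by_contra hcon
    push_neg at hcon
    have hall : ∀ c : A, (τ c).length = 1 := fun c => by
      have := hL c; have := hcon c; omega
    have : lam0 τ μ = 1 := by
      rw [lam0]
      have hstep : (∑ b, μ b * ((τ b).length : ℝ)) = ∑ b, μ b := by
        refine Finset.sum_congr rfl fun b _ => ?_
        rw [hall b]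
        simp
      rw [hstep, sum_mu (x := x) hμ]
    linarith
  obtain ⟨c, hc2⟩ := hc
  obtain ⟨Nprim, hNprim⟩ := hprim
  obtain ⟨Nm, hNm⟩ := pref_subPow hE0 hEs hfix (τ := τ) Nprim
  have hmem : c ∈ pref x Nm := by
    rw [hNm]
    exact hNprim Nprim le_rfl c (x 0)
  obtain ⟨p, -, hp⟩ := mem_pref hmem
  exact ⟨p, by rw [hp]; exact hc2⟩

include hEs hL in
lemma E_growth {p : ℕ} (hp : 2 ≤ (τ (x p)).length) : ∀ n, p + 1 ≤ n → n < E n := by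
  have hmono := E_strictMono (τ := τ) hEs hL
  intro n hn
  induction n with
  | zero => omega
  | succ n ih =>
    rcases Nat.lt_or_ge n (p+1) with hcase | hcase
    · have hnp : n = p := by omega
      have h1 : p ≤ E p := hmono.le_apply
      have h2 := hEs p
      subst hnp
      omega
    · have h3 := ih hcase
      have h4 := hEs n
      have h5 := hL (x n)
      omega

end Freq7

end S11


set_option maxHeartbeats 1000000

/-- letter counts in prefixes of a fixed point of a primitive
Pisot substitution deviate boundedly from their frequencies. -/
theorem stmt11 {A : Type*} [Fintype A] [DecidableEq A]
    (τ : A → List A) (hprim : Primitive τ) (hPisot : PisotSub τ)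
    (x : ℕ → A)
    -- `x` is a fixed point of `τ`: `x = τ(x₀)τ(x₁)⋯`, with `E` the cutting points
    (E : ℕ → ℕ) (hE0 : E 0 = 0) (hEs : ∀ n, E (n + 1) = E n + (τ (x n)).length)
    (hfix : ∀ n, occursAt (τ (x n)) x (E n))
    (μ : A → ℝ)
    (hμ : ∀ a : A, Filter.Tendsto
      (fun N : ℕ => (((List.ofFn fun k : Fin N => x k).count a : ℝ)) / N)
      Filter.atTop (nhds (μ a))) :
    ∃ C > 0, ∀ (a : A) (N : ℕ),
      |(((List.ofFn fun k : Fin N => x k).count a : ℝ)) - N * μ a| < C := by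
  classical
  have hL : ∀ b : A, 1 ≤ (τ b).length := fun b =>
    List.length_pos_iff.mpr (S11.tau_ne_nil hprim b)
  have hμ' : ∀ a : A, Filter.Tendsto (fun N : ℕ => (S11.uu x N a) / N)
      Filter.atTop (nhds (μ a)) := fun a => hμ a
  obtain ⟨cst, ρ, hcst1, hρ0, hρ1, hbound⟩ :=
    S11.hat_pow_bound hE0 hEs hfix hL hμ' hprim hPisot
  obtain ⟨p, hp⟩ := S11.exists_two hE0 hEs hfix hL hμ' hprim hPisot
  set K : ℝ := ((Finset.univ.sup (fun b : A => (τ b).length) : ℕ) : ℝ) with hKdef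
  have hK : ∀ b : A, ((τ b).length : ℝ) ≤ K := fun b =>
    Nat.cast_le.mpr (Finset.le_sup (f := fun b : A => (τ b).length) (Finset.mem_univ b))
  have hK0 : (0:ℝ) ≤ K := Nat.cast_nonneg _
  set N₀ : ℕ := E (p + 1) with hN₀
  set B₀ : ℝ := 2 * (N₀ : ℝ) with hB₀def
  have hB₀0 : (0:ℝ) ≤ B₀ := by positivity
  have hbase : ∀ N, N < N₀ → ∀ a, |S11.Dv x μ N a| ≤ B₀ := by
    intro N hN a
    have h1 : (0:ℝ) ≤ S11.uu x N a := by simp only [S11.uu]; positivity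
    have h2 : S11.uu x N a ≤ (N:ℝ) := by
      have := (List.count_le_length (a := a) (l := S11.pref x N)).trans_eq (S11.pref_length x N)
      simp only [S11.uu]
      exact_mod_cast this
    have h3 := S11.mu_nonneg hμ' a
    have h4 := S11.mu_le_one (x := x) hμ' a
    have h5 : (N:ℝ) ≤ (N₀:ℝ) := by exact_mod_cast le_of_lt hN
    have h6 : (0:ℝ) ≤ (N:ℝ) * μ a := by positivity
    have h7 : (N:ℝ) * μ a ≤ (N:ℝ) := by nlinarith
    simp only [S11.Dv]
    rw [abs_le]
    constructor <;> [nlinarith; nlinarith]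
  have hgood : ∀ N, ∃ k, S11.Good (S11.Mhat τ μ) B₀ K k (S11.Dv x μ N) := by
    intro N
    induction N using Nat.strong_induction_on with
    | _ N ih =>
      rcases Nat.lt_or_ge N N₀ with hc | hc
      · exact ⟨0, fun a => hbase N hc a⟩
      · obtain ⟨n, hn1, hn2⟩ := S11.exists_level hE0 hEs hL N
        have hmono := S11.E_strictMono (τ := τ) hEs hL
        have hpn : p + 1 ≤ n := by
          by_contra hcon
          push_neg at hcon
          have h8 : E (n+1) ≤ E (p+1) := hmono.monotone (by omega)
          omega
        have hnN : n < N := by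
          have := S11.E_growth hEs hL hp n hpn
          omega
        obtain ⟨k, hk⟩ := ih n hnN
        obtain ⟨r, hr, heq⟩ := S11.step_rec hE0 hEs hfix hL hμ' K hK hn1 hn2
        exact ⟨k+1, ⟨S11.Dv x μ n, r, hk, hr, heq⟩⟩
  have h1ρ : (0:ℝ) < 1 - ρ := by linarith
  have hcst0 : (0:ℝ) ≤ cst := by linarith
  set C : ℝ := B₀ * cst + K * cst / (1 - ρ) + 1 with hCdef
  have hC1 : (0:ℝ) ≤ B₀ * cst := mul_nonneg hB₀0 hcst0
  have hC2 : (0:ℝ) ≤ K * cst / (1 - ρ) := div_nonneg (mul_nonneg hK0 hcst0) (le_of_lt h1ρ)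
  have hCpos : 0 < C := by rw [hCdef]; linarith
  refine ⟨C, hCpos, ?_⟩
  intro a N
  obtain ⟨k, hk⟩ := hgood N
  have h := S11.good_bound hB₀0 hK0 hcst0 hρ0 hρ1 hbound k _ hk 0 a
  have hid : ∑ b, S11.Dv x μ N b * ((S11.Mhat τ μ)^0) b a = S11.Dv x μ N a := by
    simp [Matrix.one_apply, mul_ite, Finset.sum_ite_eq', Finset.mem_univ]
  rw [hid] at h
  have hρk : ρ^(k+0) ≤ 1 := pow_le_one₀ (le_of_lt hρ0) (le_of_lt hρ1)
  have h2 : B₀ * cst * ρ^(k+0) ≤ B₀ * cst := by nlinarith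
  have h3 : K * cst * ρ^0 / (1 - ρ) = K * cst / (1 - ρ) := by rw [pow_zero, mul_one]
  rw [h3] at h
  have hfin : |S11.Dv x μ N a| < C := by rw [hCdef]; linarith
  exact hfin
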